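/- Marstrand's slicing inequality: for any set E ⊆ ℝ², any one-dimensional subspace V ⊆ ℝ², and any s ≥ 1, H^s(E) ≥ c · ∫ H^{s−1}(E ∩ proj_V^{-1}(t)) dλ_V(t) for some absolute constant c > 0 (depending only on s). -/

import Mathlib

open MeasureTheory Set Filter
open scoped ENNReal RealInnerProductSpace

noncomputable section

abbrev E2 := EuclideanSpace ℝ (Fin 2)

/-- Marstrand's slicing inequality: for every `s ≥ 1` there is a constant `c > 0`
(depending only on `s`) such that for any set `E ⊆ ℝ²` and any one-dimensional
subspace `V` (spanned by a unit vector `v`),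
`H^s(E) ≥ c · ∫ H^{s−1}(E ∩ proj_V⁻¹(t)) dλ(t)`. -/
theorem stmt5 (s : ℝ) (hs : 1 ≤ s) :
    ∃ c : ℝ, 0 < c ∧ ∀ (E : Set E2) (v : E2), ‖v‖ = 1 →
      ENNReal.ofReal c * ∫⁻ t : ℝ, μH[s - 1] (E ∩ {x | ⟪v, x⟫ = t}) ∂volume ≤
        μH[s] E := by
  classical
  refine ⟨1, one_pos, fun E v hv => ?_⟩
  rw [ENNReal.ofReal_one, one_mul]
  by_cases hE : μH[s] E = ⊤
  · rw [hE]; exact le_top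
  refine ENNReal.le_of_forall_pos_le_add fun ε hε _ => ?_
  set f : E2 → ℝ := fun x => ⟪v, x⟫ with hfdef
  have hf : ∀ x y : E2, |f x - f y| ≤ dist x y := by
    intro x y
    have h1 : f x - f y = ⟪v, x - y⟫ := by simp [hfdef, inner_sub_right]
    rw [h1, dist_eq_norm]
    calc |⟪v, x - y⟫| ≤ ‖v‖ * ‖x - y‖ := abs_real_inner_le_norm _ _
      _ = ‖x - y‖ := by rw [hv, one_mul]
  set r : ℕ → ℝ≥0∞ := fun n => ((n : ℝ≥0∞) + 1)⁻¹ with hrdef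
  have hrne : ∀ n, r n ≠ ⊤ := fun n =>
    ENNReal.inv_ne_top.2 (by simp)
  have hrpos : ∀ n, 0 < r n := fun n =>
    ENNReal.inv_pos.2 (by simp [ENNReal.add_eq_top])
  -- choose efficient covers
  have hcov : ∀ n : ℕ, ∃ c : ℕ → Set E2, (E ⊆ ⋃ i, c i) ∧
      (∀ i, EMetric.diam (c i) ≤ r n) ∧
      (∑' i, ⨆ _ : (c i).Nonempty, EMetric.diam (c i) ^ s) ≤ μH[s] E + ε := by
    intro n
    have h1 : (⨅ (c : ℕ → Set E2) (_ : E ⊆ ⋃ i, c i)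
        (_ : ∀ i, EMetric.diam (c i) ≤ r n),
        ∑' i, ⨆ _ : (c i).Nonempty, EMetric.diam (c i) ^ s) ≤ μH[s] E := by
      rw [Measure.hausdorffMeasure_apply]
      exact le_iSup₂_of_le (r n) (hrpos n) le_rfl
    have h2 := h1.trans_lt (ENNReal.lt_add_right hE (ENNReal.coe_ne_zero.2 hε.ne'))
    simp only [iInf_lt_iff] at h2
    obtain ⟨c, h3, h4, h5⟩ := h2
    exact ⟨c, h3, h4, h5.le⟩
  choose c hc hcd hcs using hcov
  have hdne : ∀ n i, EMetric.diam (c n i) ≠ ⊤ := fun n i =>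
    ne_top_of_le_ne_top (hrne n) (hcd n i)
  -- intervals containing the projection of each cover set
  set I : ℕ → ℕ → Set ℝ := fun n i =>
    if (c n i).Nonempty then
      Icc (sInf (f '' c n i)) (sInf (f '' c n i) + Metric.diam (c n i)) else ∅ with hIdef
  have hI : ∀ n i, MeasurableSet (I n i) := by
    intro n i
    simp only [hIdef]
    split
    · exact measurableSet_Icc
    · exact MeasurableSet.empty
  set G : ℕ → ℝ → ℝ≥0∞ := fun n t =>
    ∑' i, (I n i).indicator (fun _ => EMetric.diam (c n i) ^ (s - 1)) t with hGdef
  have hGm : ∀ n, Measurable (G n) :=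
    fun n => Measurable.ennreal_tsum fun i => measurable_const.indicator (hI n i)
  -- pointwise domination of slice cover terms
  have hA : ∀ (n i : ℕ) (t : ℝ),
      (⨆ _ : (c n i ∩ (E ∩ {x | ⟪v, x⟫ = t})).Nonempty,
        EMetric.diam (c n i ∩ (E ∩ {x | ⟪v, x⟫ = t})) ^ (s - 1)) ≤
      (I n i).indicator (fun _ => EMetric.diam (c n i) ^ (s - 1)) t := by
    intro n i t
    refine iSup_le fun hne => ?_
    obtain ⟨x, hxc, _, hxt⟩ := hne
    have hci : (c n i).Nonempty := ⟨x, hxc⟩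
    have hbdd : ∀ y ∈ f '' c n i, t - Metric.diam (c n i) ≤ y := by
      rintro _ ⟨y, hy, rfl⟩
      have h1 := hf x y
      have h2 := Metric.dist_le_diam_of_mem' (hdne n i) hxc hy
      have h3 : f x = t := hxt
      have := abs_le.1 h1
      linarith [this.2]
    have hbb : BddBelow (f '' c n i) :=
      ⟨t - Metric.diam (c n i), hbdd⟩
    have ht1 : sInf (f '' c n i) ≤ t := csInf_le hbb ⟨x, hxc, hxt⟩
    have ht2 : t ≤ sInf (f '' c n i) + Metric.diam (c n i) := by
      have := le_csInf (hci.image f) hbdd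
      linarith
    have htI : t ∈ I n i := by
      simp only [hIdef]; rw [if_pos hci]
      exact ⟨ht1, ht2⟩
    rw [Set.indicator_of_mem htI]
    exact ENNReal.rpow_le_rpow (EMetric.diam_mono inter_subset_left) (by linarith)
  -- slice bound via liminf
  have hB : ∀ t : ℝ, μH[s - 1] (E ∩ {x | ⟪v, x⟫ = t}) ≤ liminf (fun n => G n t) atTop := by
    intro t
    rw [Measure.hausdorffMeasure_apply]
    refine iSup₂_le fun ρ hρ => ?_
    refine le_liminf_of_le (by isBoundedDefault) ?_
    have hev : ∀ᶠ n : ℕ in atTop, r n ≤ ρ := by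
      have h1 : ∀ᶠ n : ℕ in atTop, ((n : ℝ≥0∞))⁻¹ < ρ :=
        ENNReal.tendsto_inv_nat_nhds_zero.eventually_lt_const hρ
      filter_upwards [h1] with n hn
      exact le_trans (ENNReal.inv_le_inv' le_self_add) hn.le
    filter_upwards [hev] with n hn
    refine le_trans (iInf_le_of_le (fun i => c n i ∩ (E ∩ {x | ⟪v, x⟫ = t}))
      (iInf_le_of_le ?_ (iInf_le_of_le ?_ le_rfl))) ?_
    · intro x hx
      obtain ⟨i, hi⟩ := mem_iUnion.1 (hc n hx.1)
      exact mem_iUnion.2 ⟨i, hi, hx⟩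
    · intro i
      exact le_trans (EMetric.diam_mono inter_subset_left) ((hcd n i).trans hn)
    · exact ENNReal.tsum_le_tsum fun i => hA n i t
  -- integral of G n
  have hC : ∀ n, ∫⁻ t, G n t ≤ μH[s] E + ε := by
    intro n
    rw [hGdef]
    dsimp only
    rw [lintegral_tsum fun i => (measurable_const.indicator (hI n i)).aemeasurable]
    refine le_trans (ENNReal.tsum_le_tsum fun i => ?_) (hcs n)
    rw [lintegral_indicator_const (hI n i)]
    by_cases hne : (c n i).Nonempty
    · have hIvol : volume (I n i) = EMetric.diam (c n i) := by
        simp only [hIdef]; rw [if_pos hne, Real.volume_Icc]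
        rw [add_sub_cancel_left, Metric.diam]; exact ENNReal.ofReal_toReal (hdne n i)
      rw [hIvol]
      have hgoal : EMetric.diam (c n i) ^ (s - 1) * EMetric.diam (c n i) ≤
          EMetric.diam (c n i) ^ s := by
        rcases eq_or_ne (EMetric.diam (c n i)) 0 with h0 | h0
        · rw [h0, mul_zero]; exact zero_le
        · have heq : EMetric.diam (c n i) ^ (s - 1) * EMetric.diam (c n i)
              = EMetric.diam (c n i) ^ s := by
            calc EMetric.diam (c n i) ^ (s - 1) * EMetric.diam (c n i)
                = EMetric.diam (c n i) ^ (s - 1) * EMetric.diam (c n i) ^ (1 : ℝ) := by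
                  rw [ENNReal.rpow_one]
              _ = EMetric.diam (c n i) ^ (s - 1 + 1) :=
                  (ENNReal.rpow_add _ _ h0 (hdne n i)).symm
              _ = EMetric.diam (c n i) ^ s := by norm_num
          rw [heq]
      refine hgoal.trans ?_
      exact le_iSup (fun _ : (c n i).Nonempty => EMetric.diam (c n i) ^ s) hne
    · have : I n i = ∅ := by simp only [hIdef]; rw [if_neg hne]
      rw [this]
      simp
  calc ∫⁻ t, μH[s - 1] (E ∩ {x | ⟪v, x⟫ = t}) ∂volume
      ≤ ∫⁻ t, liminf (fun n => G n t) atTop ∂volume := lintegral_mono hB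
    _ ≤ liminf (fun n => ∫⁻ t, G n t) atTop := lintegral_liminf_le hGm
    _ ≤ μH[s] E + ε := by
        refine liminf_le_of_frequently_le ?_ (by isBoundedDefault)
        exact Frequently.of_forall hC


end
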